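/- Under the hypotheses of the identification model (m: ℝ → ℝⁿ continuous with |m(t)| ≡ 1 and persistence-of-excitation constants c̃, α̲, ᾱ), with κ = c̃/2 + ᾱ²c̃⁴/(2α̲) + c̃², P(t,τ) = κI − τ∫_{t−c̃}^t∫_s^t m(l)m(l)ᵀ dl ds, V(x,t,τ) = xᵀP(t,τ)x, and frozen dynamics f(x,t,τ) = τ m(t)m(t)ᵀ x for τ ∈ [−ᾱ,0], the derivative V̇ = V_t + V_x f satisfies V̇(x,t,τ) ≤ (τα̲/2)|x|² ≤ −q(τ)V(x,t,τ), where q(τ) := −τα̲/(2(κ + c̃²ᾱ)). -/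

import Mathlib

open Set intervalIntegral

set_option maxHeartbeats 1600000 in
theorem identification_V_decay
    (n : ℕ) (m : ℝ → EuclideanSpace ℝ (Fin n)) (hm : Continuous m)
    (hunit : ∀ t : ℝ, ‖m t‖ = 1)
    (ctil αlow αbar : ℝ) (hctil : 0 < ctil) (hαlow : 0 < αlow) (hαbar : 0 < αbar)
    (hPE : ∀ (t : ℝ) (x : EuclideanSpace ℝ (Fin n)),
      αlow * ‖x‖ ^ 2 ≤ (∫ r in t..(t + ctil), (inner ℝ (m r) x : ℝ) ^ 2)
        ∧ (∫ r in t..(t + ctil), (inner ℝ (m r) x : ℝ) ^ 2) ≤ αbar * ‖x‖ ^ 2)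
    (κ : ℝ) (hκ : κ = ctil / 2 + αbar ^ 2 * ctil ^ 4 / (2 * αlow) + ctil ^ 2)
    (τ : ℝ) (hτ : τ ∈ Icc (-αbar) 0)
    (t : ℝ) (x : EuclideanSpace ℝ (Fin n)) :
    -- V̇ = V_t + V_x · f for V(x,t,τ) = κ‖x‖² − τ∫∫⟪m l, x⟫² and f = τ⟪m t, x⟫ m t
    (-τ * (ctil * (inner ℝ (m t) x : ℝ) ^ 2
            - ∫ l in (t - ctil)..t, (inner ℝ (m l) x : ℝ) ^ 2)
      + 2 * τ * (inner ℝ (m t) x : ℝ)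
          * (κ * (inner ℝ (m t) x : ℝ)
              - τ * ∫ s in (t - ctil)..t, ∫ l in s..t,
                  (inner ℝ (m l) x : ℝ) * (inner ℝ (m l) (m t) : ℝ)))
      ≤ τ * αlow / 2 * ‖x‖ ^ 2
    ∧ τ * αlow / 2 * ‖x‖ ^ 2
      ≤ -(-(τ * αlow) / (2 * (κ + ctil ^ 2 * αbar)))
          * (κ * ‖x‖ ^ 2
              - τ * ∫ s in (t - ctil)..t, ∫ l in s..t, (inner ℝ (m l) x : ℝ) ^ 2) := by
  obtain ⟨hτl, hτu⟩ := hτ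
  set p : ℝ := (inner ℝ (m t) x : ℝ) with hp
  -- continuity facts
  have hinx : Continuous fun l => (inner ℝ (m l) x : ℝ) := hm.inner continuous_const
  have hinm : Continuous fun l => (inner ℝ (m l) (m t) : ℝ) := hm.inner continuous_const
  have hg : Continuous fun l => (inner ℝ (m l) x : ℝ) ^ 2 := hinx.pow 2
  have hh : Continuous fun l => (inner ℝ (m l) x : ℝ) * (inner ℝ (m l) (m t) : ℝ) :=
    hinx.mul hinm
  -- pointwise bounds
  have hbx : ∀ l : ℝ, |(inner ℝ (m l) x : ℝ)| ≤ ‖x‖ := by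
    intro l
    have := abs_real_inner_le_norm (m l) x
    rwa [hunit l, one_mul] at this
  have hbm : ∀ l : ℝ, |(inner ℝ (m l) (m t) : ℝ)| ≤ 1 := by
    intro l
    have := abs_real_inner_le_norm (m l) (m t)
    rwa [hunit l, hunit t, one_mul] at this
  have hbh : ∀ l : ℝ, |(inner ℝ (m l) x : ℝ) * (inner ℝ (m l) (m t) : ℝ)| ≤ ‖x‖ := by
    intro l
    rw [abs_mul]
    calc |(inner ℝ (m l) x : ℝ)| * |(inner ℝ (m l) (m t) : ℝ)|
        ≤ ‖x‖ * 1 := mul_le_mul (hbx l) (hbm l) (abs_nonneg _) (norm_nonneg _)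
      _ = ‖x‖ := mul_one _
  have hbg : ∀ l : ℝ, (inner ℝ (m l) x : ℝ) ^ 2 ≤ ‖x‖ ^ 2 := by
    intro l
    have := hbx l
    nlinarith [abs_nonneg ((inner ℝ (m l) x : ℝ)), sq_abs ((inner ℝ (m l) x : ℝ))]
  have hxnn : (0:ℝ) ≤ ‖x‖ := norm_nonneg x
  have hp2 : p ^ 2 ≤ ‖x‖ ^ 2 := hbg t
  -- inner primitives: continuity
  have hFcont : Continuous fun s => ∫ l in s..t,
      (inner ℝ (m l) x : ℝ) * (inner ℝ (m l) (m t) : ℝ) := by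
    have h : ∀ a b : ℝ, IntervalIntegrable
        (fun l => (inner ℝ (m l) x : ℝ) * (inner ℝ (m l) (m t) : ℝ))
        MeasureTheory.volume a b := fun a b => hh.intervalIntegrable a b
    refine ((intervalIntegral.continuous_primitive h t).neg).congr fun s => ?_
    rw [Pi.neg_apply, ← integral_symm]
  have hGcont : Continuous fun s => ∫ l in s..t, (inner ℝ (m l) x : ℝ) ^ 2 := by
    have h : ∀ a b : ℝ, IntervalIntegrable (fun l => (inner ℝ (m l) x : ℝ) ^ 2)
        MeasureTheory.volume a b := fun a b => hg.intervalIntegrable a b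
    refine ((intervalIntegral.continuous_primitive h t).neg).congr fun s => ?_
    rw [Pi.neg_apply, ← integral_symm]
  -- bound on inner primitive F
  have hFbound : ∀ s : ℝ, s ≤ t →
      ‖∫ l in s..t, (inner ℝ (m l) x : ℝ) * (inner ℝ (m l) (m t) : ℝ)‖ ≤ (t - s) * ‖x‖ := by
    intro s hs
    have := intervalIntegral.norm_integral_le_of_norm_le_const
      (a := s) (b := t) (C := ‖x‖)
      (f := fun l => (inner ℝ (m l) x : ℝ) * (inner ℝ (m l) (m t) : ℝ))
      (fun y _ => by rw [Real.norm_eq_abs]; exact hbh y)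
    calc ‖∫ l in s..t, (inner ℝ (m l) x : ℝ) * (inner ℝ (m l) (m t) : ℝ)‖
        ≤ ‖x‖ * |t - s| := this
      _ = (t - s) * ‖x‖ := by rw [abs_of_nonneg (by linarith), mul_comm]
  have hGbound : ∀ s : ℝ, s ≤ t →
      (∫ l in s..t, (inner ℝ (m l) x : ℝ) ^ 2) ≤ (t - s) * ‖x‖ ^ 2 := by
    intro s hs
    have := intervalIntegral.norm_integral_le_of_norm_le_const
      (a := s) (b := t) (C := ‖x‖ ^ 2)
      (f := fun l => (inner ℝ (m l) x : ℝ) ^ 2)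
      (fun y _ => by
        rw [Real.norm_eq_abs, abs_of_nonneg (sq_nonneg _)]; exact hbg y)
    have h2 : ‖∫ l in s..t, (inner ℝ (m l) x : ℝ) ^ 2‖ ≤ ‖x‖ ^ 2 * |t - s| := this
    rw [Real.norm_eq_abs] at h2
    calc (∫ l in s..t, (inner ℝ (m l) x : ℝ) ^ 2)
        ≤ |∫ l in s..t, (inner ℝ (m l) x : ℝ) ^ 2| := le_abs_self _
      _ ≤ ‖x‖ ^ 2 * |t - s| := h2
      _ = (t - s) * ‖x‖ ^ 2 := by rw [abs_of_nonneg (by linarith), mul_comm]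
  have hGnn : ∀ s : ℝ, s ≤ t → 0 ≤ ∫ l in s..t, (inner ℝ (m l) x : ℝ) ^ 2 := by
    intro s hs
    exact intervalIntegral.integral_nonneg hs (fun u _ => sq_nonneg _)
  -- set the double integrals
  set J : ℝ := ∫ s in (t - ctil)..t, ∫ l in s..t,
      (inner ℝ (m l) x : ℝ) * (inner ℝ (m l) (m t) : ℝ) with hJdef
  set D : ℝ := ∫ s in (t - ctil)..t, ∫ l in s..t, (inner ℝ (m l) x : ℝ) ^ 2 with hDdef
  have htsub : t - ctil ≤ t := by linarith
  -- |J| ≤ ctil^2/2 * ‖x‖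
  have hJbound : |J| ≤ ctil ^ 2 / 2 * ‖x‖ := by
    have hb : IntervalIntegrable (fun s => (t - s) * ‖x‖) MeasureTheory.volume (t - ctil) t :=
      (Continuous.mul (by continuity) continuous_const).intervalIntegrable _ _
    have hae : ∀ᵐ s ∂MeasureTheory.volume.restrict (Set.uIoc (t - ctil) t),
        ‖∫ l in s..t, (inner ℝ (m l) x : ℝ) * (inner ℝ (m l) (m t) : ℝ)‖ ≤ (t - s) * ‖x‖ := by
      refine (MeasureTheory.ae_restrict_mem measurableSet_uIoc).mono fun s hs => ?_
      have hs' : s ≤ t := by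
        rcases Set.mem_uIoc.mp hs with h | h
        · exact h.2
        · exact le_trans h.2 htsub
      exact hFbound s hs'
    have := intervalIntegral.norm_integral_le_of_norm_le htsub
      (Filter.Eventually.of_forall fun s hs => hFbound s hs.2) hb
    have hint : (∫ s in (t - ctil)..t, (t - s) * ‖x‖) = ctil ^ 2 / 2 * ‖x‖ := by
      rw [intervalIntegral.integral_mul_const]
      have : (∫ s in (t - ctil)..t, (t - s)) = ctil ^ 2 / 2 := by
        rw [intervalIntegral.integral_sub intervalIntegrable_const
          intervalIntegral.intervalIntegrable_id]
        simp [integral_id]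
        ring
      rw [this]
    rw [hint] at this
    simpa [Real.norm_eq_abs] using this
  -- 0 ≤ D ≤ ctil^2 * ‖x‖^2
  have hDnn : 0 ≤ D := by
    refine intervalIntegral.integral_nonneg htsub fun s hs => hGnn s hs.2
  have hDub : D ≤ ctil ^ 2 * ‖x‖ ^ 2 := by
    have hc1 : IntervalIntegrable (fun s => ∫ l in s..t, (inner ℝ (m l) x : ℝ) ^ 2)
        MeasureTheory.volume (t - ctil) t := hGcont.intervalIntegrable _ _
    have hc2 : IntervalIntegrable (fun _ : ℝ => ctil * ‖x‖ ^ 2)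
        MeasureTheory.volume (t - ctil) t := intervalIntegrable_const
    have := intervalIntegral.integral_mono_on htsub hc1 hc2
      (fun s hs => by
        calc (∫ l in s..t, (inner ℝ (m l) x : ℝ) ^ 2) ≤ (t - s) * ‖x‖ ^ 2 := hGbound s hs.2
          _ ≤ ctil * ‖x‖ ^ 2 := by nlinarith [hs.1, sq_nonneg ‖x‖])
    calc D ≤ ∫ _ in (t - ctil)..t, ctil * ‖x‖ ^ 2 := this
      _ = ctil ^ 2 * ‖x‖ ^ 2 := by simp; ring
  -- PE lower bound for the single integral
  have hI1 : αlow * ‖x‖ ^ 2 ≤ ∫ l in (t - ctil)..t, (inner ℝ (m l) x : ℝ) ^ 2 := by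
    have := (hPE (t - ctil) x).1
    rwa [sub_add_cancel] at this
  constructor
  · -- first inequality
    set I1 : ℝ := ∫ l in (t - ctil)..t, (inner ℝ (m l) x : ℝ) ^ 2 with hI1def
    have hτI : τ * I1 ≤ τ * (αlow * ‖x‖ ^ 2) := mul_le_mul_of_nonpos_left hI1 hτu
    -- key bound: -2 τ² p J ≤ (-τ)(A p² + αlow/2 ‖x‖²) with A = αbar²ctil⁴/(2αlow)
    have hpJ : -(p * J) ≤ |p| * (ctil ^ 2 / 2 * ‖x‖) := by
      calc -(p * J) ≤ |p * J| := neg_le_abs _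
        _ = |p| * |J| := abs_mul _ _
        _ ≤ |p| * (ctil ^ 2 / 2 * ‖x‖) :=
            mul_le_mul_of_nonneg_left hJbound (abs_nonneg _)
    have hτ2 : τ ^ 2 ≤ -αbar * τ := by nlinarith
    set A : ℝ := αbar ^ 2 * ctil ^ 4 / (2 * αlow) with hA
    have hA2 : 2 * αlow * A = αbar ^ 2 * ctil ^ 4 := by
      rw [hA]; field_simp
    have hAnn : 0 ≤ A := by rw [hA]; positivity
    have hAM : αbar * ctil ^ 2 * (|p| * ‖x‖)
        ≤ A * p ^ 2 + αlow / 2 * ‖x‖ ^ 2 := by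
      have h1 : |p| ^ 2 = p ^ 2 := sq_abs p
      have key : 2 * αlow * (A * p ^ 2 + αlow / 2 * ‖x‖ ^ 2 - αbar * ctil ^ 2 * (|p| * ‖x‖))
          = (αbar * ctil ^ 2 * |p| - αlow * ‖x‖) ^ 2 := by
        linear_combination p ^ 2 * hA2 - αbar ^ 2 * ctil ^ 4 * h1
      have hsq := sq_nonneg (αbar * ctil ^ 2 * |p| - αlow * ‖x‖)
      rw [← key] at hsq
      nlinarith [hsq, hαlow]
    have hkey : -(2 * τ ^ 2 * (p * J))
        ≤ (-τ) * (A * p ^ 2 + αlow / 2 * ‖x‖ ^ 2) := by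
      have s1 : -(2 * τ ^ 2 * (p * J)) ≤ 2 * τ ^ 2 * (|p| * (ctil ^ 2 / 2 * ‖x‖)) := by
        have := mul_le_mul_of_nonneg_left hpJ (by positivity : (0:ℝ) ≤ 2 * τ ^ 2)
        linarith
      have s2 : 2 * τ ^ 2 * (|p| * (ctil ^ 2 / 2 * ‖x‖)) = τ ^ 2 * (ctil ^ 2 * (|p| * ‖x‖)) := by
        ring
      have s3 : τ ^ 2 * (ctil ^ 2 * (|p| * ‖x‖)) ≤ (-αbar * τ) * (ctil ^ 2 * (|p| * ‖x‖)) := by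
        apply mul_le_mul_of_nonneg_right hτ2
        positivity
      have s4 : (-αbar * τ) * (ctil ^ 2 * (|p| * ‖x‖)) = (-τ) * (αbar * ctil ^ 2 * (|p| * ‖x‖)) := by
        ring
      have s5 : (-τ) * (αbar * ctil ^ 2 * (|p| * ‖x‖))
          ≤ (-τ) * (A * p ^ 2 + αlow / 2 * ‖x‖ ^ 2) :=
        mul_le_mul_of_nonneg_left hAM (by linarith)
      linarith [s1, s3, s5, s2.le, s2.ge, s4.le, s4.ge]
    have h4 : τ * ((A + 2 * ctil ^ 2) * p ^ 2) ≤ 0 :=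
      mul_nonpos_of_nonpos_of_nonneg hτu (by positivity)
    have goalexp : -τ * (ctil * p ^ 2 - I1) + 2 * τ * p * (κ * p - τ * J)
        = -τ * ctil * p ^ 2 + τ * I1 + 2 * τ * κ * p ^ 2 + (-(2 * τ ^ 2 * (p * J))) := by
      ring
    rw [goalexp, hκ]
    nlinarith [hτI, hkey, h4]
  · -- second inequality
    have hκpos : 0 < κ := by rw [hκ]; positivity
    have hCpos : 0 < κ + ctil ^ 2 * αbar := by positivity
    have hVC : κ * ‖x‖ ^ 2 - τ * D ≤ (κ + ctil ^ 2 * αbar) * ‖x‖ ^ 2 := by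
      have h1 : -τ * D ≤ αbar * D := by nlinarith
      have h2 : αbar * D ≤ αbar * (ctil ^ 2 * ‖x‖ ^ 2) :=
        mul_le_mul_of_nonneg_left hDub (le_of_lt hαbar)
      nlinarith
    have hτα : τ * αlow ≤ 0 := mul_nonpos_of_nonpos_of_nonneg hτu (le_of_lt hαlow)
    have hmul : τ * αlow * ((κ + ctil ^ 2 * αbar) * ‖x‖ ^ 2)
        ≤ τ * αlow * (κ * ‖x‖ ^ 2 - τ * D) := mul_le_mul_of_nonpos_left hVC hτα
    have hdiv := (div_le_div_iff_of_pos_right (by positivity : (0:ℝ) < 2 * (κ + ctil ^ 2 * αbar))).mpr hmul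
    have heq1 : τ * αlow * ((κ + ctil ^ 2 * αbar) * ‖x‖ ^ 2) / (2 * (κ + ctil ^ 2 * αbar))
        = τ * αlow / 2 * ‖x‖ ^ 2 := by
      field_simp
    have heq2 : τ * αlow * (κ * ‖x‖ ^ 2 - τ * D) / (2 * (κ + ctil ^ 2 * αbar))
        = -(-(τ * αlow) / (2 * (κ + ctil ^ 2 * αbar))) * (κ * ‖x‖ ^ 2 - τ * D) := by
      ring
    rw [← heq1, ← heq2]
    exact hdiv
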